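/- For any knot sequence in which no inner knot has multiplicity greater than m (m ≥ 1), for every index i with −m−1 ≤ i ≤ n−1 (using the convention N_{m,q} ≡ 0 for q < −m or q ≥ n), and for every u ∈ ℝ that is not equal to any of the knots t_{−m}, …, t_{n+m}, the following differential-recurrence relation between B-spline functions of the same degree holds: N_{m,i}(u) + ((t_i − u)/m)·N′_{m,i}(u) = ((t_{m+i+1} − t_i)/(t_{m+i+2} − t_{i+1}))·( N_{m,i+1}(u) + ((t_{m+i+2} − u)/m)·N′_{m,i+1}(u) ), where a fraction whose denominator vanishes is replaced by 0. -/

import Mathlib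

/-- The B-spline basis functions `N_{p,i}` of degree `p` over the knot
sequence `t`, defined by the de Boor–Cox recursion, with the conventions that
a fraction with vanishing denominator is replaced by `0` (automatic for real
division in Lean) and that `N_{p,q} ≡ 0` whenever `q < -p` or `q ≥ n`. -/
noncomputable def bspline (t : ℤ → ℝ) (n : ℕ) : ℕ → ℤ → ℝ → ℝ
  | 0 => fun i u =>
      if 0 ≤ i ∧ i < (n : ℤ) ∧ t i ≤ u ∧ u < t (i + 1) then 1 else 0
  | p + 1 => fun i u =>
      if -((p : ℤ) + 1) ≤ i ∧ i < (n : ℤ) then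
        (u - t i) / (t ((p : ℤ) + 1 + i) - t i) * bspline t n p i u
          + (t ((p : ℤ) + 1 + i + 1) - u) / (t ((p : ℤ) + 1 + i + 1) - t (i + 1))
              * bspline t n p (i + 1) u
      else 0

/-- The `k`-th Bernstein basis polynomial of degree `p`. -/
noncomputable def bern (p k : ℕ) (x : ℝ) : ℝ :=
  (p.choose k : ℝ) * x ^ k * (1 - x) ^ (p - k)

/-- The (formal) derivative of the B-spline. -/
noncomputable def dB (t : ℤ → ℝ) (n : ℕ) : ℕ → ℤ → ℝ → ℝ
  | 0 => fun _ _ => 0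
  | p + 1 => fun i u =>
      if -((p : ℤ) + 1) ≤ i ∧ i < (n : ℤ) then
        ((p : ℝ) + 1) * (bspline t n p i u / (t ((p : ℤ) + 1 + i) - t i)
          - bspline t n p (i + 1) u / (t ((p : ℤ) + 1 + i + 1) - t (i + 1)))
      else 0


lemma dB_succ (t : ℤ → ℝ) (n p : ℕ) (i : ℤ) (u : ℝ) :
    dB t n (p + 1) i u =
      if -((p : ℤ) + 1) ≤ i ∧ i < (n : ℤ) then
        ((p : ℝ) + 1) * (bspline t n p i u / (t ((p : ℤ) + 1 + i) - t i)
          - bspline t n p (i + 1) u / (t ((p : ℤ) + 1 + i + 1) - t (i + 1)))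
      else 0 := rfl

lemma bspline_eq_zero (t : ℤ → ℝ) (n p : ℕ) (j : ℤ) (u : ℝ)
    (h : j < -(p : ℤ) ∨ (n : ℤ) ≤ j) : bspline t n p j u = 0 := by
  cases p with
  | zero =>
      simp only [bspline]
      rw [if_neg]
      rintro ⟨h1, h2, -⟩
      omega
  | succ q =>
      simp only [bspline]
      rw [if_neg]
      rintro ⟨h1, h2⟩
      push_cast at h
      omega

lemma dB_eq_zero (t : ℤ → ℝ) (n p : ℕ) (j : ℤ) (u : ℝ)
    (h : j < -(p : ℤ) ∨ (n : ℤ) ≤ j) : dB t n p j u = 0 := by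
  cases p with
  | zero => rfl
  | succ q =>
      rw [dB_succ, if_neg]
      rintro ⟨h1, h2⟩
      push_cast at h
      omega

lemma dB_step (m n : ℕ) (t : ℤ → ℝ) (hn : 1 ≤ n)
    (hmono : ∀ k l : ℤ, -(m : ℤ) ≤ k → k ≤ l → l ≤ (n : ℤ) + m → t k ≤ t l)
    (p : ℕ) (hp : p + 1 ≤ m) (i : ℤ) (hg1 : -((p : ℤ) + 1) ≤ i) (hg2 : i < (n : ℤ)) (u : ℝ) :
    (u - t i) / (t ((p : ℤ) + 1 + i) - t i) * dB t n p i u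
      + (t ((p : ℤ) + 1 + i + 1) - u) / (t ((p : ℤ) + 1 + i + 1) - t (i + 1)) * dB t n p (i + 1) u
    = (p : ℝ) * (bspline t n p i u / (t ((p : ℤ) + 1 + i) - t i)
        - bspline t n p (i + 1) u / (t ((p : ℤ) + 1 + i + 1) - t (i + 1))) := by
  cases p with
  | zero => simp [dB]
  | succ q =>
    have r1 : (q : ℤ) + 1 + (i + 1) = (q : ℤ) + 1 + i + 1 := by ring
    have r2 : (q : ℤ) + 1 + (i + 1) + 1 = (q : ℤ) + 1 + i + 1 + 1 := by ring
    have r3 : ((q + 1 : ℕ) : ℤ) + 1 + i = (q : ℤ) + 1 + i + 1 := by push_cast; ring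
    have r4 : ((q + 1 : ℕ) : ℤ) + 1 + i + 1 = (q : ℤ) + 1 + i + 1 + 1 := by push_cast; ring
    by_cases hA : -((q : ℤ) + 1) ≤ i
    · by_cases hB : i + 1 < (n : ℤ)
      · -- main case
        have e1 : dB t n (q + 1) i u = ((q : ℝ) + 1) *
            (bspline t n q i u / (t ((q : ℤ) + 1 + i) - t i)
              - bspline t n q (i + 1) u / (t ((q : ℤ) + 1 + i + 1) - t (i + 1))) := by
          rw [dB_succ, if_pos ⟨hA, hg2⟩]
        have e2 : dB t n (q + 1) (i + 1) u = ((q : ℝ) + 1) *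
            (bspline t n q (i + 1) u / (t ((q : ℤ) + 1 + (i + 1)) - t (i + 1))
              - bspline t n q (i + 1 + 1) u / (t ((q : ℤ) + 1 + (i + 1) + 1) - t (i + 1 + 1))) := by
          rw [dB_succ, if_pos ⟨by omega, hB⟩]
        have e3 : bspline t n (q + 1) i u =
            (u - t i) / (t ((q : ℤ) + 1 + i) - t i) * bspline t n q i u
              + (t ((q : ℤ) + 1 + i + 1) - u) / (t ((q : ℤ) + 1 + i + 1) - t (i + 1))
                  * bspline t n q (i + 1) u := by
          simp only [bspline]; rw [if_pos ⟨hA, hg2⟩]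
        have e4 : bspline t n (q + 1) (i + 1) u =
            (u - t (i + 1)) / (t ((q : ℤ) + 1 + (i + 1)) - t (i + 1)) * bspline t n q (i + 1) u
              + (t ((q : ℤ) + 1 + (i + 1) + 1) - u)
                  / (t ((q : ℤ) + 1 + (i + 1) + 1) - t (i + 1 + 1))
                  * bspline t n q (i + 1 + 1) u := by
          simp only [bspline]; rw [if_pos ⟨by omega, hB⟩]
        rw [e1, e2, e3, e4, r2, r1, r4, r3]
        have hle1 : t i ≤ t (i + 1) := hmono _ _ (by omega) (by omega) (by omega)
        have hle2 : t (i + 1) ≤ t ((q : ℤ) + 1 + i + 1) :=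
          hmono _ _ (by omega) (by omega) (by omega)
        have hle3 : t ((q : ℤ) + 1 + i + 1) ≤ t ((q : ℤ) + 1 + i + 1 + 1) :=
          hmono _ _ (by omega) (by omega) (by omega)
        have key : (t ((q : ℤ) + 1 + i + 1) - t i) * (t ((q : ℤ) + 1 + i + 1) - t i)⁻¹
              * (t ((q : ℤ) + 1 + i + 1) - t (i + 1))⁻¹
            = (t ((q : ℤ) + 1 + i + 1 + 1) - t (i + 1))
              * (t ((q : ℤ) + 1 + i + 1 + 1) - t (i + 1))⁻¹
              * (t ((q : ℤ) + 1 + i + 1) - t (i + 1))⁻¹ := by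
          rcases eq_or_ne (t ((q : ℤ) + 1 + i + 1) - t i) 0 with ha | ha
          · have hb : t ((q : ℤ) + 1 + i + 1) - t (i + 1) = 0 := by linarith
            simp [hb]
          · rcases eq_or_ne (t ((q : ℤ) + 1 + i + 1 + 1) - t (i + 1)) 0 with hb | hb
            · have hb' : t ((q : ℤ) + 1 + i + 1) - t (i + 1) = 0 := by linarith
              simp [hb']
            · rw [mul_inv_cancel₀ ha, mul_inv_cancel₀ hb]
        push_cast
        linear_combination (-((q : ℝ) + 1) * bspline t n q (i + 1) u) * key
      · -- i + 1 = n
        have hin : i + 1 = (n : ℤ) := by omega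
        have z1 : dB t n (q + 1) (i + 1) u = 0 := dB_eq_zero _ _ _ _ _ (Or.inr (by omega))
        have z2 : bspline t n (q + 1) (i + 1) u = 0 :=
          bspline_eq_zero _ _ _ _ _ (Or.inr (by omega))
        have z3 : bspline t n q (i + 1) u = 0 :=
          bspline_eq_zero _ _ _ _ _ (Or.inr (by omega))
        have e1 : dB t n (q + 1) i u = ((q : ℝ) + 1) *
            (bspline t n q i u / (t ((q : ℤ) + 1 + i) - t i)
              - bspline t n q (i + 1) u / (t ((q : ℤ) + 1 + i + 1) - t (i + 1))) := by
          rw [dB_succ, if_pos ⟨hA, hg2⟩]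
        have e3 : bspline t n (q + 1) i u =
            (u - t i) / (t ((q : ℤ) + 1 + i) - t i) * bspline t n q i u
              + (t ((q : ℤ) + 1 + i + 1) - u) / (t ((q : ℤ) + 1 + i + 1) - t (i + 1))
                  * bspline t n q (i + 1) u := by
          simp only [bspline]; rw [if_pos ⟨hA, hg2⟩]
        rw [e1, e3, z1, z2, z3, r4, r3]
        push_cast
        ring
    · -- i = -(q+2)
      have hi : i = -((q : ℤ)) - 2 := by omega
      have z1 : dB t n (q + 1) i u = 0 := dB_eq_zero _ _ _ _ _ (Or.inl (by push_cast; omega))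
      have z2 : bspline t n (q + 1) i u = 0 :=
        bspline_eq_zero _ _ _ _ _ (Or.inl (by push_cast; omega))
      have z3 : bspline t n q (i + 1) u = 0 :=
        bspline_eq_zero _ _ _ _ _ (Or.inl (by omega))
      have e2 : dB t n (q + 1) (i + 1) u = ((q : ℝ) + 1) *
          (bspline t n q (i + 1) u / (t ((q : ℤ) + 1 + (i + 1)) - t (i + 1))
            - bspline t n q (i + 1 + 1) u / (t ((q : ℤ) + 1 + (i + 1) + 1) - t (i + 1 + 1))) := by
        rw [dB_succ, if_pos ⟨by omega, by omega⟩]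
      have e4 : bspline t n (q + 1) (i + 1) u =
          (u - t (i + 1)) / (t ((q : ℤ) + 1 + (i + 1)) - t (i + 1)) * bspline t n q (i + 1) u
            + (t ((q : ℤ) + 1 + (i + 1) + 1) - u)
                / (t ((q : ℤ) + 1 + (i + 1) + 1) - t (i + 1 + 1))
                * bspline t n q (i + 1 + 1) u := by
        simp only [bspline]; rw [if_pos ⟨by omega, by omega⟩]
      rw [e2, e4, z1, z2, z3, r2, r1, r4, r3]
      push_cast
      ring

lemma bspline_hasDerivAt (m n : ℕ) (t : ℤ → ℝ) (hn : 1 ≤ n)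
    (hmono : ∀ k l : ℤ, -(m : ℤ) ≤ k → k ≤ l → l ≤ (n : ℤ) + m → t k ≤ t l)
    (u : ℝ) (hu : ∀ k : ℤ, -(m : ℤ) ≤ k → k ≤ (n : ℤ) + m → u ≠ t k) :
    ∀ p : ℕ, p ≤ m → ∀ i : ℤ, HasDerivAt (bspline t n p i) (dB t n p i u) u := by
  intro p
  induction p with
  | zero =>
      intro _ i
      have hd : dB t n 0 i u = 0 := rfl
      rw [hd]
      have hev : bspline t n 0 i =ᶠ[nhds u] fun _ => bspline t n 0 i u := by
        by_cases hg : (0 : ℤ) ≤ i ∧ i < (n : ℤ)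
        · have hui : u ≠ t i := hu i (by omega) (by omega)
          have hui1 : u ≠ t (i + 1) := hu (i + 1) (by omega) (by omega)
          by_cases hmem : t i ≤ u ∧ u < t (i + 1)
          · have h1 : t i < u := lt_of_le_of_ne hmem.1 (Ne.symm hui)
            filter_upwards [Ioi_mem_nhds h1, Iio_mem_nhds hmem.2] with v hv1 hv2
            simp only [bspline]
            rw [if_pos ⟨hg.1, hg.2, le_of_lt hv1, hv2⟩, if_pos ⟨hg.1, hg.2, hmem.1, hmem.2⟩]
          · rcases not_and_or.mp hmem with h | h
            · have h1 : u < t i := not_le.mp h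
              filter_upwards [Iio_mem_nhds h1] with v hv
              simp only [bspline]
              have c1 : ¬(0 ≤ i ∧ i < (n : ℤ) ∧ t i ≤ v ∧ v < t (i + 1)) := by
                rintro ⟨-, -, h3, -⟩; exact absurd h3 (not_le.mpr hv)
              have c2 : ¬(0 ≤ i ∧ i < (n : ℤ) ∧ t i ≤ u ∧ u < t (i + 1)) := by
                rintro ⟨-, -, h3, -⟩; exact absurd h3 (not_le.mpr h1)
              rw [if_neg c1, if_neg c2]
            · have h2 : t (i + 1) < u := lt_of_le_of_ne (not_lt.mp h) hui1.symm
              filter_upwards [Ioi_mem_nhds h2] with v hv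
              simp only [bspline]
              have c1 : ¬(0 ≤ i ∧ i < (n : ℤ) ∧ t i ≤ v ∧ v < t (i + 1)) := by
                rintro ⟨-, -, -, h4⟩; exact absurd h4 (not_lt.mpr hv.le)
              have c2 : ¬(0 ≤ i ∧ i < (n : ℤ) ∧ t i ≤ u ∧ u < t (i + 1)) := by
                rintro ⟨-, -, -, h4⟩; exact absurd h4 (not_lt.mpr h2.le)
              rw [if_neg c1, if_neg c2]
        · filter_upwards with v
          simp only [bspline]
          rw [if_neg (fun h => hg ⟨h.1, h.2.1⟩), if_neg (fun h => hg ⟨h.1, h.2.1⟩)]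
      exact (hasDerivAt_const u _).congr_of_eventuallyEq hev
  | succ p IH =>
      intro hp i
      have hp' : p ≤ m := by omega
      by_cases hg : -((p : ℤ) + 1) ≤ i ∧ i < (n : ℤ)
      · have hfun : bspline t n (p + 1) i = fun v =>
            (v - t i) / (t ((p : ℤ) + 1 + i) - t i) * bspline t n p i v
              + (t ((p : ℤ) + 1 + i + 1) - v) / (t ((p : ℤ) + 1 + i + 1) - t (i + 1))
                  * bspline t n p (i + 1) v := by
          funext v; simp only [bspline]; rw [if_pos hg]
        rw [hfun]
        have h1 : HasDerivAt (fun v : ℝ => (v - t i) / (t ((p : ℤ) + 1 + i) - t i))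
            (1 / (t ((p : ℤ) + 1 + i) - t i)) u :=
          ((hasDerivAt_id u).sub_const (t i)).div_const _
        have h2 : HasDerivAt
            (fun v : ℝ => (t ((p : ℤ) + 1 + i + 1) - v) / (t ((p : ℤ) + 1 + i + 1) - t (i + 1)))
            (-1 / (t ((p : ℤ) + 1 + i + 1) - t (i + 1))) u := by
          have := ((hasDerivAt_id u).const_sub (t ((p : ℤ) + 1 + i + 1))).div_const
            (t ((p : ℤ) + 1 + i + 1) - t (i + 1))
          exact this
        have H := (h1.mul (IH hp' i)).add (h2.mul (IH hp' (i + 1)))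
        have hval : dB t n (p + 1) i u =
            (1 / (t ((p : ℤ) + 1 + i) - t i) * bspline t n p i u
              + (u - t i) / (t ((p : ℤ) + 1 + i) - t i) * dB t n p i u)
            + (-1 / (t ((p : ℤ) + 1 + i + 1) - t (i + 1)) * bspline t n p (i + 1) u
              + (t ((p : ℤ) + 1 + i + 1) - u) / (t ((p : ℤ) + 1 + i + 1) - t (i + 1))
                  * dB t n p (i + 1) u) := by
          have hstep := dB_step m n t hn hmono p hp i hg.1 hg.2 u
          rw [dB_succ, if_pos hg]
          linear_combination -hstep
        rw [hval]
        exact H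
      · have hfun : bspline t n (p + 1) i = fun _ => 0 := by
          funext v; simp only [bspline]; rw [if_neg hg]
        have hd : dB t n (p + 1) i u = 0 := by rw [dB_succ, if_neg hg]
        rw [hfun, hd]
        exact hasDerivAt_const u 0

/-- the differential-recurrence relation between B-spline
functions of the same degree `m`, for an arbitrary knot sequence in which no
inner knot has multiplicity greater than `m`:
`N_{m,i}(u) + ((t_i − u)/m)·N′_{m,i}(u)
   = ((t_{m+i+1} − t_i)/(t_{m+i+2} − t_{i+1}))
        ·(N_{m,i+1}(u) + ((t_{m+i+2} − u)/m)·N′_{m,i+1}(u))`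
for `−m−1 ≤ i ≤ n−1` and every `u` which is not a knot (fractions with
vanishing denominator are `0`, which is automatic for real division). -/
theorem bspline_diff_rec_same_degree
    (m n : ℕ) (hm : 1 ≤ m) (hn : 1 ≤ n) (t : ℤ → ℝ)
    (hmono : ∀ k l : ℤ, -(m : ℤ) ≤ k → k ≤ l → l ≤ (n : ℤ) + m → t k ≤ t l)
    (h0n : t 0 < t n)
    (hmult : ∀ r : ℤ, 1 ≤ r → r ≤ (n : ℤ) - 1 →
      ((Finset.Icc (-(m : ℤ)) ((n : ℤ) + m)).filter (fun k => t k = t r)).card ≤ m)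
    (i : ℤ) (hi1 : -(m : ℤ) - 1 ≤ i) (hi2 : i ≤ (n : ℤ) - 1)
    (u : ℝ) (hu : ∀ k : ℤ, -(m : ℤ) ≤ k → k ≤ (n : ℤ) + m → u ≠ t k) :
    bspline t n m i u + ((t i - u) / m) * deriv (bspline t n m i) u
      = (t ((m : ℤ) + i + 1) - t i) / (t ((m : ℤ) + i + 2) - t (i + 1))
          * (bspline t n m (i + 1) u
              + ((t ((m : ℤ) + i + 2) - u) / m) * deriv (bspline t n m (i + 1)) u) := by
  obtain ⟨M, rfl⟩ : ∃ M, m = M + 1 := ⟨m - 1, by omega⟩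
  have hderiv : ∀ j : ℤ, deriv (bspline t n (M + 1) j) u = dB t n (M + 1) j u := fun j =>
    (bspline_hasDerivAt (M + 1) n t hn hmono u hu (M + 1) le_rfl j).deriv
  rw [hderiv i, hderiv (i + 1)]
  have rA : ((M + 1 : ℕ) : ℤ) + i + 1 = (M : ℤ) + 1 + i + 1 := by push_cast; ring
  have rB : ((M + 1 : ℕ) : ℤ) + i + 2 = (M : ℤ) + 1 + i + 1 + 1 := by push_cast; ring
  rw [rA, rB]
  have hm0 : ((M : ℝ) + 1) ≠ 0 := by positivity
  have hc : ((M : ℝ) + 1)⁻¹ * ((M : ℝ) + 1) = 1 := inv_mul_cancel₀ hm0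
  have hL : bspline t n (M + 1) i u + (t i - u) / ((M : ℝ) + 1) * dB t n (M + 1) i u
      = (t ((M : ℤ) + 1 + i + 1) - t i) / (t ((M : ℤ) + 1 + i + 1) - t (i + 1))
          * bspline t n M (i + 1) u := by
    by_cases hgi : -((M : ℤ) + 1) ≤ i
    · have e3 : bspline t n (M + 1) i u =
          (u - t i) / (t ((M : ℤ) + 1 + i) - t i) * bspline t n M i u
            + (t ((M : ℤ) + 1 + i + 1) - u) / (t ((M : ℤ) + 1 + i + 1) - t (i + 1))
                * bspline t n M (i + 1) u := by
        simp only [bspline]; rw [if_pos ⟨hgi, by omega⟩]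
      have e1 : dB t n (M + 1) i u = ((M : ℝ) + 1) *
          (bspline t n M i u / (t ((M : ℤ) + 1 + i) - t i)
            - bspline t n M (i + 1) u / (t ((M : ℤ) + 1 + i + 1) - t (i + 1))) := by
        rw [dB_succ, if_pos ⟨hgi, by omega⟩]
      rw [e1, e3]
      linear_combination ((t i - u) * (bspline t n M i u / (t ((M : ℤ) + 1 + i) - t i)
        - bspline t n M (i + 1) u / (t ((M : ℤ) + 1 + i + 1) - t (i + 1)))) * hc
    · have z1 : bspline t n (M + 1) i u = 0 :=
        bspline_eq_zero _ _ _ _ _ (Or.inl (by push_cast; omega))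
      have z2 : dB t n (M + 1) i u = 0 := dB_eq_zero _ _ _ _ _ (Or.inl (by push_cast; omega))
      have z3 : bspline t n M (i + 1) u = 0 :=
        bspline_eq_zero _ _ _ _ _ (Or.inl (by omega))
      rw [z1, z2, z3]
      ring
  have hR : bspline t n (M + 1) (i + 1) u
        + (t ((M : ℤ) + 1 + i + 1 + 1) - u) / ((M : ℝ) + 1) * dB t n (M + 1) (i + 1) u
      = (t ((M : ℤ) + 1 + i + 1 + 1) - t (i + 1)) / (t ((M : ℤ) + 1 + i + 1) - t (i + 1))
          * bspline t n M (i + 1) u := by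
    have r1 : (M : ℤ) + 1 + (i + 1) = (M : ℤ) + 1 + i + 1 := by ring
    have r2 : (M : ℤ) + 1 + (i + 1) + 1 = (M : ℤ) + 1 + i + 1 + 1 := by ring
    by_cases hgi : i + 1 < (n : ℤ)
    · have e4 : bspline t n (M + 1) (i + 1) u =
          (u - t (i + 1)) / (t ((M : ℤ) + 1 + (i + 1)) - t (i + 1)) * bspline t n M (i + 1) u
            + (t ((M : ℤ) + 1 + (i + 1) + 1) - u)
                / (t ((M : ℤ) + 1 + (i + 1) + 1) - t (i + 1 + 1))
                * bspline t n M (i + 1 + 1) u := by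
        simp only [bspline]; rw [if_pos ⟨by omega, hgi⟩]
      have e2 : dB t n (M + 1) (i + 1) u = ((M : ℝ) + 1) *
          (bspline t n M (i + 1) u / (t ((M : ℤ) + 1 + (i + 1)) - t (i + 1))
            - bspline t n M (i + 1 + 1) u
                / (t ((M : ℤ) + 1 + (i + 1) + 1) - t (i + 1 + 1))) := by
        rw [dB_succ, if_pos ⟨by omega, hgi⟩]
      rw [e2, e4, r2, r1]
      linear_combination ((t ((M : ℤ) + 1 + i + 1 + 1) - u)
        * (bspline t n M (i + 1) u / (t ((M : ℤ) + 1 + i + 1) - t (i + 1))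
          - bspline t n M (i + 1 + 1) u
              / (t ((M : ℤ) + 1 + i + 1 + 1) - t (i + 1 + 1)))) * hc
    · have z1 : bspline t n (M + 1) (i + 1) u = 0 :=
        bspline_eq_zero _ _ _ _ _ (Or.inr (by omega))
      have z2 : dB t n (M + 1) (i + 1) u = 0 := dB_eq_zero _ _ _ _ _ (Or.inr (by omega))
      have z3 : bspline t n M (i + 1) u = 0 :=
        bspline_eq_zero _ _ _ _ _ (Or.inr (by omega))
      rw [z1, z2, z3]
      ring
  have hcast : ((M + 1 : ℕ) : ℝ) = (M : ℝ) + 1 := by push_cast; ring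
  rw [hcast, hL, hR]
  rcases eq_or_ne (i + 1) (n : ℤ) with hin | hin
  · have hN2 : bspline t n M (i + 1) u = 0 :=
      bspline_eq_zero _ _ _ _ _ (Or.inr (by omega))
    rw [hN2]
    ring
  · rcases eq_or_ne (t ((M : ℤ) + 1 + i + 1 + 1) - t (i + 1)) 0 with hb | hb
    · have hβ : t ((M : ℤ) + 1 + i + 1) - t (i + 1) = 0 := by
        have h1 : t (i + 1) ≤ t ((M : ℤ) + 1 + i + 1) :=
          hmono _ _ (by push_cast; omega) (by omega) (by push_cast; omega)
        have h2 : t ((M : ℤ) + 1 + i + 1) ≤ t ((M : ℤ) + 1 + i + 1 + 1) :=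
          hmono _ _ (by push_cast; omega) (by omega) (by push_cast; omega)
        linarith
      rw [hβ, hb]
      simp
    · have hcb : (t ((M : ℤ) + 1 + i + 1 + 1) - t (i + 1))⁻¹
          * (t ((M : ℤ) + 1 + i + 1 + 1) - t (i + 1)) = 1 := inv_mul_cancel₀ hb
      linear_combination (-((t ((M : ℤ) + 1 + i + 1) - t i)
        * (t ((M : ℤ) + 1 + i + 1) - t (i + 1))⁻¹ * bspline t n M (i + 1) u)) * hcb
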